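/- For every $\sigma$-hypergraph $H = H(n, r, q \mid \sigma)$ with $n \ge s(\sigma)$ and $q \ge a_1$, the independence number satisfies $\alpha(H) \ge \max_{1 \le j \le s} \big( (j-1)q + (a_j - 1)(n - j + 1) \big)$, where $\sigma = (a_1 \ge a_2 \ge \dots \ge a_s)$. -/

import Mathlib

/-- `K` is an edge of the σ-hypergraph `H(n,r,q | σ)` (with σ given by `a : Fin s → ℕ`). -/
def isEdge {n q s : ℕ} (a : Fin s → ℕ) (K : Finset (Fin n × Fin q)) : Prop :=
  Multiset.filter (fun x => x ≠ 0)
      (Multiset.map (fun i => (K.filter (fun v => v.1 = i)).card)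
        (Finset.univ : Finset (Fin n)).val)
    = Multiset.map a (Finset.univ : Finset (Fin s)).val

/-- card of `{i : Fin N | i < m}` equals `m` when `m ≤ N`. -/
lemma card_filter_val_lt_eq (N m : ℕ) (h : m ≤ N) :
    (Finset.univ.filter fun i : Fin N => (i : ℕ) < m).card = m := by
  have heq : (Finset.univ.filter fun i : Fin N => (i : ℕ) < m)
      = (Finset.univ : Finset (Fin m)).map (Fin.castLEEmb h) := by
    ext i
    simp only [Finset.mem_filter, Finset.mem_univ, true_and, Finset.mem_map,
      Fin.castLEEmb_apply]
    constructor
    · intro hi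
      exact ⟨⟨(i : ℕ), hi⟩, by ext; simp [Fin.castLE]⟩
    · rintro ⟨x, rfl⟩
      exact x.isLt
  rw [heq, Finset.card_map, Finset.card_univ, Fintype.card_fin]

lemma card_filter_val_lt_le (N m : ℕ) :
    (Finset.univ.filter fun i : Fin N => (i : ℕ) < m).card ≤ m := by
  rcases le_or_gt m N with h | h
  · exact (card_filter_val_lt_eq N m h).le
  · exact le_trans (le_trans (Finset.card_filter_le _ _) (by simp)) h.le

lemma countP_univ_eq_card_filter {α : Type*} [Fintype α] (p : α → Prop) [DecidablePred p] :
    Multiset.countP p (Finset.univ : Finset α).val = (Finset.univ.filter p).card := by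
  rw [Multiset.countP_eq_card_filter]
  rfl

theorem stmt_14 (n r q s : ℕ) (a : Fin s → ℕ)
    (hs : 1 ≤ s)
    (hpos : ∀ i, 1 ≤ a i)
    (hmono : ∀ i j : Fin s, i ≤ j → a j ≤ a i)
    (hsum : ∑ i, a i = r)
    (hn : s ≤ n) (hq : a ⟨0, hs⟩ ≤ q) :
    ∀ j : Fin s, ∃ S : Finset (Fin n × Fin q),
      (∀ E : Finset (Fin n × Fin q), isEdge a E → ¬ E ⊆ S) ∧
      (j : ℕ) * q + (a j - 1) * (n - (j : ℕ)) ≤ S.card := by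
  intro j
  have haj_le_q : a j ≤ q :=
    le_trans (hmono ⟨0, hs⟩ j (Fin.mk_le_of_le_val (Nat.zero_le _))) hq
  have hjn : (j : ℕ) ≤ n := le_trans (le_of_lt j.isLt) hn
  set A : Finset (Fin n × Fin q) :=
    (Finset.univ.filter fun i : Fin n => (i : ℕ) < (j : ℕ)) ×ˢ Finset.univ with hA
  set B : Finset (Fin n × Fin q) :=
    (Finset.univ.filter fun i : Fin n => (j : ℕ) ≤ (i : ℕ)) ×ˢ
      (Finset.univ.filter fun v : Fin q => (v : ℕ) < a j - 1) with hB
  refine ⟨A ∪ B, ?_, ?_⟩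
  · -- independence
    intro E hE hsub
    have hsmall : ∀ i : Fin n, (j : ℕ) ≤ (i : ℕ) →
        (E.filter (fun v => v.1 = i)).card ≤ a j - 1 := by
      intro i hi
      have hstep : (E.filter (fun v => v.1 = i)).card ≤
          (Finset.univ.filter fun v : Fin q => (v : ℕ) < a j - 1).card := by
        apply Finset.card_le_card_of_injOn Prod.snd
        · intro v hv
          simp only [Finset.mem_coe, Finset.mem_filter] at hv
          have hvS := hsub hv.1
          simp only [hA, hB, Finset.mem_union, Finset.mem_product, Finset.mem_filter,
            Finset.mem_univ, true_and, and_true] at hvS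
          simp only [Finset.mem_coe, Finset.mem_filter, Finset.mem_univ, true_and]
          rcases hvS with h1 | h2
          · exfalso; rw [hv.2] at h1; omega
          · exact h2.2
        · intro v hv w hw hvw
          simp only [Finset.mem_coe, Finset.mem_filter] at hv hw
          exact Prod.ext (hv.2.trans hw.2.symm) hvw
      exact le_trans hstep (card_filter_val_lt_le q (a j - 1))
    -- count classes with intersection ≥ a j
    have h2 := congrArg (Multiset.countP (fun x => a j ≤ x)) hE
    rw [Multiset.countP_filter] at h2
    have hcongr : Multiset.countP (fun x => a j ≤ x ∧ x ≠ 0)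
        (Multiset.map (fun i => (E.filter (fun v => v.1 = i)).card)
          (Finset.univ : Finset (Fin n)).val)
      = Multiset.countP (fun x => a j ≤ x)
        (Multiset.map (fun i => (E.filter (fun v => v.1 = i)).card)
          (Finset.univ : Finset (Fin n)).val) :=
      Multiset.countP_congr rfl
        (fun x _ => propext ⟨And.left, fun h => ⟨h, by have := hpos j; omega⟩⟩)
    rw [hcongr, Multiset.countP_map, Multiset.countP_map,
      ← Multiset.countP_eq_card_filter, ← Multiset.countP_eq_card_filter,
      countP_univ_eq_card_filter, countP_univ_eq_card_filter] at h2
    have hL : (Finset.univ.filter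
        fun i : Fin n => a j ≤ (E.filter (fun v => v.1 = i)).card).card ≤ (j : ℕ) := by
      calc (Finset.univ.filter fun i : Fin n => a j ≤ (E.filter (fun v => v.1 = i)).card).card
          ≤ (Finset.univ.filter fun i : Fin n => (i : ℕ) < (j : ℕ)).card := by
            apply Finset.card_le_card
            intro i hi
            simp only [Finset.mem_filter, Finset.mem_univ, true_and] at hi ⊢
            by_contra hcon
            push_neg at hcon
            have := hsmall i hcon
            have := hpos j
            omega
        _ = (j : ℕ) := card_filter_val_lt_eq n (j : ℕ) hjn
    have hR : (j : ℕ) + 1 ≤ (Finset.univ.filter fun k : Fin s => a j ≤ a k).card := by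
      calc (j : ℕ) + 1 = (Finset.Iic j).card := (Fin.card_Iic j).symm
        _ ≤ (Finset.univ.filter fun k : Fin s => a j ≤ a k).card := by
            apply Finset.card_le_card
            intro k hk
            simp only [Finset.mem_Iic] at hk
            simp only [Finset.mem_filter, Finset.mem_univ, true_and]
            exact hmono k j hk
    omega
  · -- cardinality
    have hdisj : Disjoint A B := by
      rw [Finset.disjoint_left]
      intro v hv hv'
      simp only [hA, hB, Finset.mem_product, Finset.mem_filter, Finset.mem_univ,
        true_and] at hv hv'
      omega
    rw [Finset.card_union_of_disjoint hdisj, hA, hB, Finset.card_product, Finset.card_product]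
    have h1 : (Finset.univ.filter fun i : Fin n => (i : ℕ) < (j : ℕ)).card = (j : ℕ) :=
      card_filter_val_lt_eq n (j : ℕ) hjn
    have h2 : (Finset.univ.filter fun i : Fin n => (j : ℕ) ≤ (i : ℕ)).card = n - (j : ℕ) := by
      have hcompl : (Finset.univ.filter fun i : Fin n => (j : ℕ) ≤ (i : ℕ))
          = (Finset.univ.filter fun i : Fin n => (i : ℕ) < (j : ℕ))ᶜ := by
        ext i
        simp [not_lt]
      rw [hcompl, Finset.card_compl, h1]
      simp
    rw [h1, h2, card_filter_val_lt_eq q (a j - 1) (by omega), Finset.card_univ, Fintype.card_fin, Nat.mul_comm (n - (j : ℕ))]
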